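/- If f : X → Y is a perfect map between paracompact Hausdorff spaces and X is submetrizable (admits a continuous metric), then the Δ-dimension of f is at most countable, i.e., dim_Δ(f) ≤ ℵ₀. -/

import Mathlib

open unitInterval

/-- `CovDimLE X n` : the covering dimension of `X` is at most `n`; every finite
open cover has a finite open refinement of order at most `n + 1`. -/
def CovDimLE (X : Type) [TopologicalSpace X] (n : ℕ) : Prop :=
  ∀ 𝒰 : Set (Set X), 𝒰.Finite → (∀ U ∈ 𝒰, IsOpen U) → ⋃₀ 𝒰 = Set.univ →
    ∃ 𝒱 : Set (Set X), 𝒱.Finite ∧ (∀ V ∈ 𝒱, IsOpen V) ∧ ⋃₀ 𝒱 = Set.univ ∧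
      (∀ V ∈ 𝒱, ∃ U ∈ 𝒰, V ⊆ U) ∧ ∀ x : X, Set.ncard {V ∈ 𝒱 | x ∈ V} ≤ n + 1

/-- A map is light if all of its fibers are zero-dimensional. -/
def IsLightMap {X Y : Type} [TopologicalSpace X] [TopologicalSpace Y] (f : X → Y) : Prop :=
  ∀ y : Y, CovDimLE ↥(f ⁻¹' {y}) 0

/-- A map is perfect if it is closed and all of its fibers are compact. -/
def IsPerfectMap {X Y : Type} [TopologicalSpace X] [TopologicalSpace Y] (f : X → Y) : Prop :=
  IsClosedMap f ∧ ∀ y : Y, IsCompact (f ⁻¹' {y})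

/-- The Δ-dimension of a continuous map `f : X → Y` : the smallest cardinal `τ`
for which there is a continuous map `g : X → [0,1]^τ` such that the diagonal
product `f Δ g` is a light map. -/
noncomputable def deltaDim {X Y : Type} [TopologicalSpace X] [TopologicalSpace Y]
    (f : C(X, Y)) : Cardinal :=
  sInf {τ : Cardinal | ∃ (ι : Type) (g : C(X, ι → I)),
    Cardinal.mk ι = τ ∧ IsLightMap (fun x => (f x, g x))}

/-- A space is submetrizable if it admits a continuous injection into a metrizable space. -/
def Submetrizable (X : Type) [TopologicalSpace X] : Prop :=
  ∃ (M : Type) (_ : MetricSpace M) (h : X → M), Continuous h ∧ Function.Injective h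


open unitInterval Set Function Metric

lemma covDimLE_zero_of_subsingleton (Z : Type) [TopologicalSpace Z] [Subsingleton Z] :
    CovDimLE Z 0 := by
  intro 𝒰 hfin hopen hcov
  by_cases hZ : Nonempty Z
  · obtain ⟨z⟩ := hZ
    have hz : z ∈ ⋃₀ 𝒰 := hcov ▸ mem_univ z
    obtain ⟨U, hU, hzU⟩ := hz
    refine ⟨{U}, finite_singleton _, ?_, ?_, ?_, ?_⟩
    · rintro V rfl; exact hopen _ hU
    · apply eq_univ_of_forall; intro z'
      exact ⟨U, rfl, (Subsingleton.elim z z') ▸ hzU⟩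
    · rintro V rfl; exact ⟨_, hU, subset_rfl⟩
    · intro x
      have hsub : {V ∈ ({U} : Set (Set Z)) | x ∈ V} ⊆ {U} := sep_subset _ _
      calc Set.ncard {V ∈ ({U} : Set (Set Z)) | x ∈ V} ≤ Set.ncard ({U} : Set (Set Z)) :=
            Set.ncard_le_ncard hsub (finite_singleton _)
        _ = 1 := Set.ncard_singleton _
  · refine ⟨∅, finite_empty, by simp, ?_, by simp, fun x => absurd ⟨x⟩ hZ⟩
    rw [Set.sUnion_empty]
    exact (Set.univ_eq_empty_iff.mpr (not_nonempty_iff.mp hZ)).symm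

lemma isLightMap_of_fiber_injective {X Y Z : Type} [TopologicalSpace X] [TopologicalSpace Y]
    [TopologicalSpace Z] {f : X → Y} {g : X → Z}
    (h : ∀ x x', f x = f x' → g x = g x' → x = x') :
    IsLightMap (fun x => (f x, g x)) := by
  intro p
  haveI : Subsingleton ↥((fun x => (f x, g x)) ⁻¹' {p}) := by
    constructor
    rintro ⟨a, ha⟩ ⟨b, hb⟩
    simp only [Set.mem_preimage, Set.mem_singleton_iff, Prod.ext_iff] at ha hb
    exact Subtype.ext (h a b (ha.1.trans hb.1.symm) (ha.2.trans hb.2.symm))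
  exact covDimLE_zero_of_subsingleton _

lemma exists_open_nhd_preimage_subset {X Y : Type} [TopologicalSpace X] [TopologicalSpace Y]
    {f : X → Y} (hf : IsClosedMap f) {y : Y} {U : Set X} (hU : IsOpen U)
    (hsub : f ⁻¹' {y} ⊆ U) : ∃ W, IsOpen W ∧ y ∈ W ∧ f ⁻¹' W ⊆ U := by
  refine ⟨(f '' Uᶜ)ᶜ, (hf _ hU.isClosed_compl).isOpen_compl, ?_, ?_⟩
  · intro hy
    obtain ⟨x, hx, hfx⟩ := hy
    exact hx (hsub (by simp [hfx]))
  · intro x hx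
    by_contra hxU
    exact hx ⟨x, hxU, rfl⟩
lemma exists_sigma_discrete_refinement {Y : Type} [TopologicalSpace Y] [T2Space Y]
    [ParacompactSpace Y] {ι : Type} (U : ι → Set Y) (ho : ∀ i, IsOpen (U i))
    (hU : ⋃ i, U i = Set.univ) :
    ∃ W : ι → ℕ → Set Y,
      (∀ i m, IsOpen (W i m)) ∧ (∀ i m, W i m ⊆ U i) ∧ (∀ y, ∃ i m, y ∈ W i m) ∧
      (∀ m y, ∃ N ∈ nhds y, ∀ i j,
        (N ∩ W i m).Nonempty → (N ∩ W j m).Nonempty → i = j) := by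
  obtain ⟨ψ, hψ⟩ := PartitionOfUnity.exists_isSubordinate isClosed_univ U ho (hU ▸ subset_rfl)
  set r : ι → ι → Prop := WellOrderingRel with hr
  have hwf : WellFounded r := (WellOrderingRel.isWellOrder).toIsWellFounded.wf
  set c : ℕ → ℝ := fun m => 1 / (m + 1) with hc
  have hcpos : ∀ m, 0 < c m := fun m => by positivity
  set C : ℕ → ι → Set Y := fun m t => {y | c m / 2 ≤ ψ t y} with hC
  have hCclosed : ∀ m t, IsClosed (C m t) := fun m t =>
    isClosed_le continuous_const (ψ t).continuous
  have hCsub : ∀ m t, C m t ⊆ support (ψ t) := fun m t y hy => by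
    have : (0:ℝ) < ψ t y := lt_of_lt_of_le (by positivity) hy
    exact ne_of_gt this
  have hClf : ∀ m, LocallyFinite (C m) := fun m => ψ.locallyFinite.subset (hCsub m)
  set W : ι → ℕ → Set Y := fun i m =>
    {y | c m < ψ i y} \ ⋃ t : {t // r t i}, C m t.1 with hW
  refine ⟨W, ?_, ?_, ?_, ?_⟩
  · intro i m
    apply IsOpen.sdiff
    · exact isOpen_lt continuous_const (ψ i).continuous
    · exact ((hClf m).comp_injective Subtype.val_injective).isClosed_iUnion
        fun t => hCclosed m t.1
  · intro i m y hy
    have : y ∈ support (ψ i) := ne_of_gt (lt_of_le_of_lt (hcpos m).le hy.1)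
    exact hψ i (subset_closure this)
  · intro y
    have hex : ∃ i, ψ i y ≠ 0 := by
      obtain ⟨i, hi⟩ := ψ.exists_pos (Set.mem_univ y)
      exact ⟨i, ne_of_gt hi⟩
    set S : Set ι := {i | ψ i y ≠ 0} with hS
    have hSne : S.Nonempty := hex
    set i0 : ι := hwf.min S hSne with hi0
    have hi0S : i0 ∈ S := hwf.min_mem S hSne
    have hψpos : 0 < ψ i0 y := lt_of_le_of_ne (ψ.nonneg i0 y) (Ne.symm hi0S)
    obtain ⟨m, hm⟩ := exists_nat_one_div_lt hψpos
    refine ⟨i0, m, ⟨hm, ?_⟩⟩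
    intro hmem
    rw [Set.mem_iUnion] at hmem
    obtain ⟨t, hty⟩ := hmem
    replace hty : c m / 2 ≤ ψ t.1 y := hty
    have htS : t.1 ∉ S := fun h => hwf.not_lt_min S h t.2
    have : ψ t.1 y = 0 := not_not.mp htS
    rw [this] at hty
    exact absurd hty (not_le.mpr (by positivity))
  · intro m y
    obtain ⟨N₀, hN₀, hfin⟩ := ψ.locallyFinite y
    set F : Finset ι := hfin.toFinset with hF
    set N : Set Y := N₀ ∩ ⋂ t ∈ F, {z | |ψ t z - ψ t y| < c m / 4} with hN
    have hNnhds : N ∈ nhds y := by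
      refine Filter.inter_mem hN₀ ?_
      refine (Set.Finite.isOpen_biInter F.finite_toSet fun t _ => ?_).mem_nhds ?_
      · have : Continuous fun z => |ψ t z - ψ t y| :=
          ((ψ t).continuous.sub continuous_const).abs
        exact isOpen_lt this continuous_const
      · refine Set.mem_iInter₂.2 fun t _ => ?_
        simp only [Set.mem_setOf_eq, sub_self, abs_zero]
        positivity
    refine ⟨N, hNnhds, ?_⟩
    have key : ∀ i j, r i j → (N ∩ W i m).Nonempty → (N ∩ W j m).Nonempty → False := by
      intro i j hij ⟨p, hpN, hpW⟩ ⟨q, hqN, hqW⟩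
      have hpi : c m < ψ i p := hpW.1
      have hiF : i ∈ F := by
        rw [hF, Set.Finite.mem_toFinset]
        exact ⟨p, ne_of_gt (lt_trans (hcpos m) hpi), hpN.1⟩
      have hqi : ψ i q < c m / 2 := by
        have := hqW.2
        rw [Set.mem_iUnion] at this
        push_neg at this
        have h2 := this ⟨i, hij⟩
        simpa [hC, not_le] using h2
      have hp4 : |ψ i p - ψ i y| < c m / 4 := by
        have := hpN.2
        rw [Set.mem_iInter₂] at this
        exact this i hiF
      have hq4 : |ψ i q - ψ i y| < c m / 4 := by
        have := hqN.2
        rw [Set.mem_iInter₂] at this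
        exact this i hiF
      have : ψ i p - ψ i q < c m / 2 := by
        have := abs_sub_abs_le_abs_sub (ψ i p - ψ i y) (ψ i q - ψ i y)
        have h := (abs_sub (ψ i p - ψ i y) (ψ i q - ψ i y)).trans_lt
          (add_lt_add hp4 hq4)
        calc ψ i p - ψ i q = (ψ i p - ψ i y) - (ψ i q - ψ i y) := by ring
          _ ≤ |(ψ i p - ψ i y) - (ψ i q - ψ i y)| := le_abs_self _
          _ < c m / 4 + c m / 4 := by
              calc |(ψ i p - ψ i y) - (ψ i q - ψ i y)|
                  ≤ |ψ i p - ψ i y| + |ψ i q - ψ i y| := abs_sub _ _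
                _ < c m / 4 + c m / 4 := add_lt_add hp4 hq4
          _ = c m / 2 := by ring
      linarith
    intro i j hi hj
    by_contra hne
    rcases trichotomous_of WellOrderingRel i j with h | h | h
    · exact key i j h hi hj
    · exact hne h
    · exact key j i h hj hi
lemma exists_fiber_separating {X Y : Type} [TopologicalSpace X] [TopologicalSpace Y]
    [T2Space X] [T2Space Y] [ParacompactSpace X] [ParacompactSpace Y]
    (f : C(X, Y)) (hf : IsPerfectMap f) (hX : Submetrizable X) :
    ∃ g : C(X, ℕ × ℕ × ℕ → I), ∀ x x', f x = f x' → g x = g x' → x = x' := by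
  classical
  obtain ⟨M, _inst, h, hcont, hinj⟩ := hX
  set r : ℕ → ℝ := fun n => 1 / (n + 1) with hrdef
  have hrpos : ∀ n, 0 < r n := fun n => by positivity
  have hB : ∀ (n : ℕ) (y : Y), ∃ WL : Set Y × List X, IsOpen WL.1 ∧ y ∈ WL.1 ∧
      f ⁻¹' WL.1 ⊆ ⋃ t ∈ WL.2, h ⁻¹' (ball (h t) (r n)) := by
    intro n y
    have hcover : f ⁻¹' {y} ⊆ ⋃ x : X, h ⁻¹' (ball (h x) (r n)) := fun x _ =>
      Set.mem_iUnion.2 ⟨x, by simp [mem_ball, hrpos n]⟩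
    obtain ⟨T, hT⟩ := (hf.2 y).elim_finite_subcover
      (fun x : X => h ⁻¹' (ball (h x) (r n))) (fun x => isOpen_ball.preimage hcont) hcover
    have hopenU : IsOpen (⋃ t ∈ T, h ⁻¹' (ball (h t) (r n))) :=
      isOpen_biUnion fun t _ => isOpen_ball.preimage hcont
    obtain ⟨Wy, hWopen, hyW, hWsub⟩ := exists_open_nhd_preimage_subset hf.1 hopenU hT
    refine ⟨(Wy, T.toList), hWopen, hyW, ?_⟩
    intro x hx
    have hx2 := hWsub hx
    simp only [Set.mem_iUnion] at hx2 ⊢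
    obtain ⟨t, ht, hxt⟩ := hx2
    exact ⟨t, (Finset.mem_toList).2 ht, hxt⟩
  choose WL hWopen hWmem hWsub using hB
  have hC : ∀ n : ℕ, ∃ W : Y → ℕ → Set Y,
      (∀ i m, IsOpen (W i m)) ∧ (∀ i m, W i m ⊆ (WL n i).1) ∧ (∀ y, ∃ i m, y ∈ W i m) ∧
      (∀ m y, ∃ N ∈ nhds y, ∀ i j,
        (N ∩ W i m).Nonempty → (N ∩ W j m).Nonempty → i = j) := fun n =>
    exists_sigma_discrete_refinement (fun y => (WL n y).1) (fun y => hWopen n y)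
      (Set.eq_univ_of_forall fun y => Set.mem_iUnion.2 ⟨y, hWmem n y⟩)
  choose W hWo hWrefines hWcov hWdisc using hC
  have hD : ∀ n : ℕ, ∃ ψ : PartitionOfUnity (Y × ℕ) Y Set.univ,
      ψ.IsSubordinate (fun p => W n p.1 p.2) := fun n =>
    PartitionOfUnity.exists_isSubordinate isClosed_univ _ (fun p => hWo n p.1 p.2)
      (fun y _ => let ⟨i, m, him⟩ := hWcov n y; Set.mem_iUnion.2 ⟨(i, m), him⟩)
  choose ψ hψ using hD
  set L : ℕ → Y → List X := fun n s => (WL n s).2 with hLdef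
  set O : ℕ → Y → ℕ → Set X := fun n s i =>
    if hi : i < (L n s).length then h ⁻¹' (ball (h ((L n s).get ⟨i, hi⟩)) (r n)) else ∅
    with hOdef
  have hOopen : ∀ n s i, IsOpen (O n s i) := by
    intro n s i
    rw [hOdef]
    dsimp only
    split
    · exact isOpen_ball.preimage hcont
    · exact isOpen_empty
  have hOsub : ∀ n s, f ⁻¹' (WL n s).1 ⊆ ⋃ i, O n s i := by
    intro n s x hx
    have hx2 := hWsub n s hx
    simp only [Set.mem_iUnion] at hx2
    obtain ⟨t, htL, hxt⟩ := hx2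
    obtain ⟨⟨i, hi⟩, hget⟩ := List.mem_iff_get.1 htL
    refine Set.mem_iUnion.2 ⟨i, ?_⟩
    rw [hOdef]
    dsimp only
    rw [dif_pos hi, hget]
    exact hxt
  have hE : ∀ (n m : ℕ) (s : Y), ∃ α : PartitionOfUnity (Option ℕ) X Set.univ,
      α.IsSubordinate (fun o =>
        Option.rec ((f ⁻¹' tsupport (ψ n (s, m)))ᶜ : Set X) (O n s) o) := by
    intro n m s
    apply PartitionOfUnity.exists_isSubordinate isClosed_univ
    · rintro (_ | i)
      · exact (IsClosed.preimage f.continuous isClosed_closure).isOpen_compl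
      · exact hOopen n s i
    · intro x _
      by_cases hx : x ∈ f ⁻¹' tsupport (ψ n (s, m))
      · have h1 : f x ∈ W n s m := hψ n (s, m) hx
        have h2 : x ∈ f ⁻¹' (WL n s).1 := hWrefines n s m h1
        obtain ⟨i, hi⟩ := Set.mem_iUnion.1 (hOsub n s h2)
        exact Set.mem_iUnion.2 ⟨some i, hi⟩
      · exact Set.mem_iUnion.2 ⟨none, hx⟩
  choose α hα using hE
  have huniq : ∀ (n m : ℕ) (y : Y) (s s' : Y),
      ψ n (s, m) y ≠ 0 → ψ n (s', m) y ≠ 0 → s = s' := by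
    intro n m y s s' hs hs'
    obtain ⟨N, hN, hkey⟩ := hWdisc n m y
    have hyN : y ∈ N := mem_of_mem_nhds hN
    have h1 : y ∈ W n s m := hψ n (s, m) (subset_closure (mem_support.2 hs))
    have h2 : y ∈ W n s' m := hψ n (s', m) (subset_closure (mem_support.2 hs'))
    exact hkey s s' ⟨y, hyN, h1⟩ ⟨y, hyN, h2⟩
  set Φ : ℕ × ℕ × ℕ → X → ℝ := fun q x =>
    ∑ᶠ s : Y, ψ q.1 (s, q.2.1) (f x) * α q.1 q.2.1 s (some q.2.2) x with hΦdef
  have hval : ∀ (n m i : ℕ) (x : X) (s : Y), ψ n (s, m) (f x) ≠ 0 →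
      Φ (n, m, i) x = ψ n (s, m) (f x) * α n m s (some i) x := by
    intro n m i x s hs
    apply finsum_eq_single
    intro s' hs'
    by_cases h0 : ψ n (s', m) (f x) = 0
    · rw [h0, zero_mul]
    · exact absurd (huniq n m (f x) s' s h0 hs) hs'
  have hΦ0 : ∀ q x, 0 ≤ Φ q x := fun q x =>
    finsum_nonneg fun s => mul_nonneg ((ψ q.1).nonneg _ _) ((α q.1 q.2.1 s).nonneg _ _)
  have hΦ1 : ∀ q x, Φ q x ≤ 1 := by
    rintro ⟨n, m, i⟩ x
    by_cases hs : ∃ s, ψ n (s, m) (f x) ≠ 0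
    · obtain ⟨s, hs⟩ := hs
      rw [hval n m i x s hs]
      have h1 := (ψ n).le_one (s, m) (f x)
      have h2 := (α n m s).le_one (some i) x
      have h3 := (ψ n).nonneg (s, m) (f x)
      have h4 := (α n m s).nonneg (some i) x
      nlinarith
    · push_neg at hs
      have : Φ (n, m, i) x = 0 :=
        finsum_eq_zero_of_forall_eq_zero fun s => by rw [hs s, zero_mul]
      rw [this]; exact zero_le_one
  have hlf : ∀ (n m i : ℕ), LocallyFinite fun s : Y =>
      support fun x => ψ n (s, m) (f x) * α n m s (some i) x := by
    intro n m i x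
    obtain ⟨N, hN, hkey⟩ := hWdisc n m (f x)
    refine ⟨f ⁻¹' N, f.continuous.continuousAt.preimage_mem_nhds hN, ?_⟩
    have hsub : ∀ s : Y, (support fun z => ψ n (s, m) (f z) * α n m s (some i) z) ⊆
        f ⁻¹' (W n s m) := by
      intro s z hz
      have hz1 : ψ n (s, m) (f z) ≠ 0 := fun h0 => hz (by simp [h0])
      exact hψ n (s, m) (subset_closure (mem_support.2 hz1))
    apply Set.Subsingleton.finite
    intro s hs s' hs'
    obtain ⟨z, hz1, hz2⟩ := hs
    obtain ⟨z', hz1', hz2'⟩ := hs'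
    exact hkey s s' ⟨f z, hz2, hsub s hz1⟩ ⟨f z', hz2', hsub s' hz1'⟩
  have hΦcont : ∀ q, Continuous (Φ q) := by
    rintro ⟨n, m, i⟩
    apply continuous_finsum
    · intro s
      exact (((ψ n) (s, m)).continuous.comp f.continuous).mul
        ((α n m s) (some i)).continuous
    · exact hlf n m i
  refine ⟨⟨fun x q => ⟨Φ q x, hΦ0 q x, hΦ1 q x⟩,
    continuous_pi fun q => ((hΦcont q).subtype_mk _)⟩, ?_⟩
  intro x x' hfx hgx
  have hΦeq : ∀ q, Φ q x = Φ q x' := by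
    intro q
    have := congrFun hgx q
    exact Subtype.ext_iff.1 this
  apply hinj
  by_contra hne
  have hd : 0 < dist (h x) (h x') := dist_pos.2 hne
  have hlt : ∀ n : ℕ, dist (h x) (h x') < 2 * r n := by
    intro n
    obtain ⟨⟨s, m⟩, hp⟩ := (ψ n).exists_pos (Set.mem_univ (f x))
    have hpne : ψ n (s, m) (f x) ≠ 0 := ne_of_gt hp
    have hpne' : ψ n (s, m) (f x') ≠ 0 := by rw [← hfx]; exact hpne
    have hαeq : ∀ i : ℕ, α n m s (some i) x = α n m s (some i) x' := by
      intro i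
      have h1 := hval n m i x s hpne
      have h2 := hval n m i x' s hpne'
      have h3 := hΦeq (n, m, i)
      rw [h1, h2, ← hfx] at h3
      exact mul_left_cancel₀ hpne h3
    have hxts : x ∈ f ⁻¹' tsupport (ψ n (s, m)) :=
      subset_closure (mem_support.2 hpne)
    have hnone : α n m s none x = 0 := by
      by_contra h0
      exact (hα n m s none (subset_closure (mem_support.2 h0))) hxts
    obtain ⟨o, ho⟩ := (α n m s).exists_pos (Set.mem_univ x)
    obtain (_ | i) := o
    · rw [hnone] at ho; exact absurd ho (lt_irrefl 0)
    have hx1 : x ∈ O n s i :=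
      hα n m s (some i) (subset_closure (mem_support.2 (ne_of_gt ho)))
    have hx2 : x' ∈ O n s i := by
      have hne0 : α n m s (some i) x' ≠ 0 := by rw [← hαeq i]; exact ne_of_gt ho
      exact hα n m s (some i) (subset_closure (mem_support.2 hne0))
    rw [hOdef] at hx1 hx2
    dsimp only at hx1 hx2
    by_cases hi : i < (L n s).length
    · rw [dif_pos hi] at hx1 hx2
      have d1 : dist (h x) (h ((L n s).get ⟨i, hi⟩)) < r n := hx1
      have d2 : dist (h x') (h ((L n s).get ⟨i, hi⟩)) < r n := hx2
      calc dist (h x) (h x') ≤ dist (h x) (h ((L n s).get ⟨i, hi⟩)) +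
            dist (h x') (h ((L n s).get ⟨i, hi⟩)) := dist_triangle_right _ _ _
        _ < 2 * r n := by linarith
    · rw [dif_neg hi] at hx1
      exact absurd hx1 (Set.notMem_empty x)
  obtain ⟨n, hn⟩ := exists_nat_one_div_lt (half_pos hd)
  have := hlt n
  rw [hrdef] at this
  simp only at this
  have : (2 : ℝ) * (1 / (n + 1)) < 2 * (dist (h x) (h x') / 2) := by
    apply mul_lt_mul_of_pos_left _ (by norm_num : (0:ℝ) < 2)
    exact_mod_cast hn
  linarith

/-- The Δ-dimension of a perfect map between paracompact Hausdorff spaces with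
submetrizable domain is at most countable. -/
theorem deltaDim_le_aleph0_of_submetrizable {X Y : Type} [TopologicalSpace X]
    [TopologicalSpace Y] [T2Space X] [T2Space Y] [ParacompactSpace X] [ParacompactSpace Y]
    (f : C(X, Y)) (hf : IsPerfectMap f) (hX : Submetrizable X) :
    deltaDim f ≤ Cardinal.aleph0 := by
  obtain ⟨g, hg⟩ := exists_fiber_separating f hf hX
  apply csInf_le'
  exact ⟨ℕ × ℕ × ℕ, g, Cardinal.mk_eq_aleph0 _, isLightMap_of_fiber_injective hg⟩
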